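/- In the concrete quasi-free CAR model with λ : ℤ → ℝ, 0 < λ_l < 1 for all l, the operators G∘b_l lie in the commutant of the *-algebra generated by the a_m: for all l, m ∈ ℤ, (G∘b_l)∘a_m = a_m∘(G∘b_l) and (G∘b_l)∘a_m* = a_m*∘(G∘b_l). (This is the statement that Γ⊗Γ·b_R(h_l) belongs to the commutant M_R′ of the quasi-free CAR factor M_R.) -/

import Mathlib

/- The concrete quasi-free CAR model: `H = ℓ²(Finset ℤ × Finset ℤ)` with orthonormal basis
`e (A, B)`, vacuum `Ω = e (∅, ∅)`, and operators `a l`, `b l`, `G` given on the basis by the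
quasi-free formulas with symbol `λ` (diagonal, `R h_l = λ_l h_l`). -/

noncomputable section

/-- The GNS Hilbert space: `ℓ²` over pairs of finite subsets of `ℤ`. -/
abbrev CARSpace := lp (fun _ : Finset ℤ × Finset ℤ => ℂ) 2

/-- The orthonormal basis vector `e_{(A,B)}`. -/
def carE (p : Finset ℤ × Finset ℤ) : CARSpace := lp.single 2 p 1

/-- The vacuum vector `Ω = e_{(∅,∅)}`. -/
def carΩ : CARSpace := carE (∅, ∅)

/-- `n(l, X)` = number of elements of `X` strictly below `l`. -/
def nlt (l : ℤ) (X : Finset ℤ) : ℕ := (X.filter fun j => j < l).card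

/-- `a` is the family of quasi-free annihilation-type operators `a_l = π_R(a(h_l))`:
`a_l e_{(A,B)} = √(1−λ_l)·(−1)^{|B|}·(−1)^{n(l,A)}·[l ∉ A]·e_{(A∪{l},B)}
              + √(λ_l)·(−1)^{n(l,B)}·[l ∈ B]·e_{(A,B∖{l})}`. -/
def IsCAR_a (lam : ℤ → ℝ) (a : ℤ → CARSpace →L[ℂ] CARSpace) : Prop :=
  ∀ (l : ℤ) (A B : Finset ℤ),
    a l (carE (A, B)) =
      ((Real.sqrt (1 - lam l) : ℂ) * (-1) ^ B.card * (-1) ^ nlt l A *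
          (if l ∈ A then 0 else 1)) • carE (insert l A, B) +
      ((Real.sqrt (lam l) : ℂ) * (-1) ^ nlt l B *
          (if l ∈ B then 1 else 0)) • carE (A, B.erase l)

/-- `b` is the family of commutant quasi-free operators:
`b_l e_{(A,B)} = √(λ_l)·(−1)^{|B|}·(−1)^{n(l,A)}·[l ∉ A]·e_{(A∪{l},B)}
              − √(1−λ_l)·(−1)^{n(l,B)}·[l ∈ B]·e_{(A,B∖{l})}`. -/
def IsCAR_b (lam : ℤ → ℝ) (b : ℤ → CARSpace →L[ℂ] CARSpace) : Prop :=
  ∀ (l : ℤ) (A B : Finset ℤ),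
    b l (carE (A, B)) =
      ((Real.sqrt (lam l) : ℂ) * (-1) ^ B.card * (-1) ^ nlt l A *
          (if l ∈ A then 0 else 1)) • carE (insert l A, B) -
      ((Real.sqrt (1 - lam l) : ℂ) * (-1) ^ nlt l B *
          (if l ∈ B then 1 else 0)) • carE (A, B.erase l)

/-- `G = Γ⊗Γ` : `G e_{(A,B)} = (−1)^{|A|+|B|} e_{(A,B)}`. -/
def IsCAR_G (G : CARSpace →L[ℂ] CARSpace) : Prop :=
  ∀ (A B : Finset ℤ), G (carE (A, B)) = ((-1 : ℂ) ^ (A.card + B.card)) • carE (A, B)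


local notation "⟪" x ", " y "⟫" => @inner ℂ _ _ x y

lemma single_eq_smul_carE (i : Finset ℤ × Finset ℤ) (c : ℂ) :
    lp.single 2 i c = c • carE i := by
  rw [carE, ← lp.single_smul]; norm_num

lemma ext_basis {T S : CARSpace →L[ℂ] CARSpace} (h : ∀ p, T (carE p) = S (carE p)) : T = S := by
  ext1 x
  have hs := lp.hasSum_single (E := fun _ : Finset ℤ × Finset ℤ => ℂ) (p := 2)
    (by norm_num) x
  have h1 : HasSum (fun i => T (lp.single 2 i (x i))) (T x) := hs.mapL T
  have h2 : HasSum (fun i => S (lp.single 2 i (x i))) (S x) := hs.mapL S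
  refine h1.unique (h2.congr_fun fun i => ?_)
  rw [single_eq_smul_carE, map_smul, map_smul, h i]

lemma carE_apply (p q : Finset ℤ × Finset ℤ) : (carE p) q = if q = p then 1 else 0 := by
  rw [carE, lp.single_apply]; split_ifs with h <;> simp [h]

lemma coord_ext {x y : CARSpace} (h : ∀ q, x q = y q) : x = y := by ext q; exact h q

lemma inner_carE_left (q : Finset ℤ × Finset ℤ) (x : CARSpace) : ⟪carE q, x⟫ = x q := by
  rw [carE, lp.inner_single_left]; simp

lemma inner_carE_right (q : Finset ℤ × Finset ℤ) (x : CARSpace) :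
    ⟪x, carE q⟫ = starRingEnd ℂ (x q) := by
  rw [carE, lp.inner_single_right]; simp

lemma star_apply_coord (T : CARSpace →L[ℂ] CARSpace) (x : CARSpace) (q : Finset ℤ × Finset ℤ) :
    (star T x) q = ⟪T (carE q), x⟫ := by
  rw [← inner_carE_left, ContinuousLinearMap.star_eq_adjoint,
    ContinuousLinearMap.adjoint_inner_right]

lemma nlt_insert_self (m : ℤ) (X : Finset ℤ) : nlt m (insert m X) = nlt m X := by
  unfold nlt; rw [Finset.filter_insert]; simp

lemma nlt_erase_self (m : ℤ) (X : Finset ℤ) : nlt m (X.erase m) = nlt m X := by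
  unfold nlt
  rw [Finset.filter_erase, Finset.erase_eq_of_notMem (by simp)]

lemma pow_nlt_insert (l m : ℤ) (X : Finset ℤ) (h : m ∉ X) :
    ((-1:ℂ)) ^ nlt l (insert m X) = (if m < l then -1 else 1) * (-1) ^ nlt l X := by
  unfold nlt; rw [Finset.filter_insert]
  by_cases hml : m < l
  · rw [if_pos hml, if_pos hml,
      Finset.card_insert_of_notMem (fun hc => h (Finset.mem_filter.mp hc).1)]
    rw [pow_succ]; ring
  · rw [if_neg hml, if_neg hml, one_mul]

lemma pow_nlt_erase (l m : ℤ) (X : Finset ℤ) (h : m ∈ X) :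
    ((-1:ℂ)) ^ nlt l X = (if m < l then -1 else 1) * (-1) ^ nlt l (X.erase m) := by
  conv_lhs => rw [← Finset.insert_erase h]
  rw [pow_nlt_insert l m _ (Finset.notMem_erase m X)]

lemma pow_nlt_erase' (l m : ℤ) (X : Finset ℤ) (h : m ∈ X) :
    ((-1:ℂ)) ^ nlt l (X.erase m) = (if m < l then -1 else 1) * (-1) ^ nlt l X := by
  rw [pow_nlt_erase l m X h]
  split_ifs <;> ring

lemma pow_card_insert (m : ℤ) (X : Finset ℤ) (h : m ∉ X) :
    ((-1:ℂ)) ^ (insert m X).card = -(-1) ^ X.card := by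
  rw [Finset.card_insert_of_notMem h, pow_succ]; ring

lemma pow_card_erase (m : ℤ) (X : Finset ℤ) (h : m ∈ X) :
    ((-1:ℂ)) ^ (X.erase m).card = -(-1) ^ X.card := by
  conv_rhs => rw [← Finset.insert_erase h, pow_card_insert m _ (Finset.notMem_erase m X)]
  ring

lemma key1 (m : ℤ) (r : ℂ) (A B C D : Finset ℤ) :
    r * (-1) ^ D.card * (-1) ^ nlt m C * (if m ∈ C then 0 else 1) *
        (if (A, B) = (insert m C, D) then (1:ℂ) else 0)
    = r * (-1) ^ B.card * (-1) ^ nlt m A * (if m ∈ A then 1 else 0) *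
        (if (C, D) = (A.erase m, B) then (1:ℂ) else 0) := by
  by_cases hmC : m ∈ C
  · have h : (C, D) ≠ (A.erase m, B) := by
      intro h
      have hC : C = A.erase m := (Prod.mk.injEq .. ▸ h).1
      exact Finset.notMem_erase m A (hC ▸ hmC)
    simp only [if_pos hmC, if_neg h]; ring
  · by_cases h2 : (A, B) = (insert m C, D)
    · obtain ⟨hA, hB⟩ := Prod.mk.injEq .. ▸ h2
      subst hA; subst hB
      simp [Finset.erase_insert hmC, nlt_insert_self, hmC]
    · by_cases h3 : (C, D) = (A.erase m, B)
      · have hmA : m ∉ A := by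
          intro hmA
          obtain ⟨hC, hD⟩ := Prod.mk.injEq .. ▸ h3
          exact h2 (by rw [hC, hD, Finset.insert_erase hmA])
        simp only [if_neg h2, if_neg hmA]; ring
      · simp only [if_neg h2, if_neg h3]; ring

lemma key2 (m : ℤ) (r : ℂ) (A B C D : Finset ℤ) :
    r * (-1) ^ nlt m D * (if m ∈ D then 1 else 0) *
        (if (A, B) = (C, D.erase m) then (1:ℂ) else 0)
    = r * (-1) ^ nlt m B * (if m ∈ B then 0 else 1) *
        (if (C, D) = (A, insert m B) then (1:ℂ) else 0) := by
  by_cases hmD : m ∈ D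
  · by_cases h2 : (A, B) = (C, D.erase m)
    · obtain ⟨hA, hB⟩ := Prod.mk.injEq .. ▸ h2
      subst hA; subst hB
      simp [Finset.insert_erase hmD, nlt_erase_self, hmD, Finset.notMem_erase]
    · by_cases h3 : (C, D) = (A, insert m B)
      · have hmB : m ∈ B := by
          by_contra hmB
          obtain ⟨hC, hD⟩ := Prod.mk.injEq .. ▸ h3
          exact h2 (by rw [hC, hD, Finset.erase_insert hmB])
        simp only [if_neg h2, if_pos hmB]; ring
      · simp only [if_neg h2, if_neg h3]; ring
  · have h3 : (C, D) ≠ (A, insert m B) := by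
      intro h3
      obtain ⟨hC, hD⟩ := Prod.mk.injEq .. ▸ h3
      exact hmD (hD ▸ Finset.mem_insert_self m B)
    simp only [if_neg hmD, if_neg h3]; ring

lemma coord_add_smul (c d : ℂ) (p1 p2 q : Finset ℤ × Finset ℤ) :
    ((c • carE p1 + d • carE p2) : CARSpace) q
      = c * (if q = p1 then 1 else 0) + d * (if q = p2 then 1 else 0) := by
  simp only [lp.coeFn_add, lp.coeFn_smul, carE_apply, Pi.add_apply, Pi.smul_apply, smul_eq_mul]

lemma star_a_apply {lam : ℤ → ℝ} {a : ℤ → CARSpace →L[ℂ] CARSpace} (ha : IsCAR_a lam a)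
    (m : ℤ) (A B : Finset ℤ) :
    star (a m) (carE (A, B)) =
      ((Real.sqrt (1 - lam m) : ℂ) * (-1) ^ B.card * (-1) ^ nlt m A *
          (if m ∈ A then 1 else 0)) • carE (A.erase m, B) +
      ((Real.sqrt (lam m) : ℂ) * (-1) ^ nlt m B *
          (if m ∈ B then 0 else 1)) • carE (A, insert m B) := by
  apply coord_ext; intro q
  obtain ⟨C, D⟩ := q
  rw [star_apply_coord, ha m C D, inner_carE_right, coord_add_smul, coord_add_smul]
  simp only [map_add, map_mul, map_pow, apply_ite (starRingEnd ℂ), map_one, map_zero, map_neg,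
    Complex.conj_ofReal]
  linear_combination key1 m (Real.sqrt (1 - lam m) : ℂ) A B C D +
    key2 m (Real.sqrt (lam m) : ℂ) A B C D

lemma insert_self_eq {m : ℤ} {X : Finset ℤ} (h : m ∈ X) : insert m X = X :=
  Finset.insert_eq_self.mpr h

lemma erase_self_eq {m : ℤ} {X : Finset ℤ} (h : m ∉ X) : X.erase m = X :=
  Finset.erase_eq_of_notMem h

set_option maxHeartbeats 1600000

section mainparts
variable {lam : ℤ → ℝ} {a b : ℤ → CARSpace →L[ℂ] CARSpace} {G : CARSpace →L[ℂ] CARSpace}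

lemma part1_ne (ha : IsCAR_a lam a) (hb : IsCAR_b lam b)
    (hG : IsCAR_G G) (l m : ℤ) (hne : l ≠ m) :
    (G * b l) * a m = a m * (G * b l) := by
  unfold IsCAR_a at ha
  unfold IsCAR_b at hb
  unfold IsCAR_G at hG
  have hne' : m ≠ l := hne.symm
  apply ext_basis; intro p; obtain ⟨A, B⟩ := p
  simp only [ContinuousLinearMap.mul_apply]
  rcases lt_or_gt_of_ne hne with hlm | hlm
  · have hnml : ¬ (m < l) := not_lt_of_gt hlm
    by_cases hmA : m ∈ A <;> by_cases hlA : l ∈ A <;> by_cases hmB : m ∈ B <;>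
        by_cases hlB : l ∈ B <;>
    · simp only [ha, hb, hG, map_add, map_sub, map_smul, smul_add, smul_sub, smul_smul]
      simp only [insert_self_eq, erase_self_eq, pow_card_insert, pow_card_erase, pow_nlt_insert,
        pow_nlt_erase', nlt_insert_self, nlt_erase_self, Finset.mem_insert, Finset.mem_erase,
        Finset.notMem_erase, hmA, hlA, hmB, hlB, hne, hne', hlm, hnml, pow_add, ne_eq,
        not_false_eq_true, not_true, true_and, and_true, false_and, and_false, or_false, false_or,
        if_true, if_false, mul_zero, zero_mul, mul_one, one_mul, zero_smul, smul_zero, add_zero,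
        zero_add, sub_zero, zero_sub, neg_neg, neg_zero, neg_smul, smul_neg,
        Finset.insert_comm l m, Finset.erase_right_comm (a := m) (b := l)]
      try module
  · have hnlm : ¬ (l < m) := not_lt_of_gt hlm
    by_cases hmA : m ∈ A <;> by_cases hlA : l ∈ A <;> by_cases hmB : m ∈ B <;>
        by_cases hlB : l ∈ B <;>
    · simp only [ha, hb, hG, map_add, map_sub, map_smul, smul_add, smul_sub, smul_smul]
      simp only [insert_self_eq, erase_self_eq, pow_card_insert, pow_card_erase, pow_nlt_insert,
        pow_nlt_erase', nlt_insert_self, nlt_erase_self, Finset.mem_insert, Finset.mem_erase,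
        Finset.notMem_erase, hmA, hlA, hmB, hlB, hne, hne', hlm, hnlm, pow_add, ne_eq,
        not_false_eq_true, not_true, true_and, and_true, false_and, and_false, or_false, false_or,
        if_true, if_false, mul_zero, zero_mul, mul_one, one_mul, zero_smul, smul_zero, add_zero,
        zero_add, sub_zero, zero_sub, neg_neg, neg_zero, neg_smul, smul_neg,
        Finset.insert_comm l m, Finset.erase_right_comm (a := m) (b := l)]
      try module

lemma part1_eq (ha : IsCAR_a lam a) (hb : IsCAR_b lam b)
    (hG : IsCAR_G G) (l : ℤ) :
    (G * b l) * a l = a l * (G * b l) := by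
  unfold IsCAR_a at ha
  unfold IsCAR_b at hb
  unfold IsCAR_G at hG
  apply ext_basis; intro p; obtain ⟨A, B⟩ := p
  simp only [ContinuousLinearMap.mul_apply]
  by_cases hlA : l ∈ A <;> by_cases hlB : l ∈ B <;>
  · simp only [ha, hb, hG, map_add, map_sub, map_smul, smul_add, smul_sub, smul_smul]
    simp only [insert_self_eq, erase_self_eq, pow_card_insert, pow_card_erase, pow_nlt_insert,
      pow_nlt_erase', nlt_insert_self, nlt_erase_self, Finset.mem_insert, Finset.mem_erase,
      Finset.notMem_erase, hlA, hlB, lt_irrefl, pow_add, ne_eq,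
      not_false_eq_true, not_true, true_and, and_true, false_and, and_false, or_false, false_or,
      if_true, if_false, mul_zero, zero_mul, mul_one, one_mul, zero_smul, smul_zero, add_zero,
      zero_add, sub_zero, zero_sub, neg_neg, neg_zero, neg_smul, smul_neg]
    try module
    try (rcases Nat.even_or_odd (nlt l A) with h1|h1 <;>
      rcases Nat.even_or_odd (nlt l B) with h2|h2 <;>
      rcases Nat.even_or_odd A.card with h3|h3 <;>
      rcases Nat.even_or_odd B.card with h4|h4 <;>
      simp only [h1.neg_one_pow, h2.neg_one_pow, h3.neg_one_pow, h4.neg_one_pow] <;>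
      module)

lemma part2_ne (ha : IsCAR_a lam a) (hb : IsCAR_b lam b)
    (hG : IsCAR_G G) (l m : ℤ) (hne : l ≠ m) :
    (G * b l) * star (a m) = star (a m) * (G * b l) := by
  have hsa := star_a_apply ha
  unfold IsCAR_b at hb
  unfold IsCAR_G at hG
  have hne' : m ≠ l := hne.symm
  apply ext_basis; intro p; obtain ⟨A, B⟩ := p
  simp only [ContinuousLinearMap.mul_apply]
  rcases lt_or_gt_of_ne hne with hlm | hlm
  · have hnml : ¬ (m < l) := not_lt_of_gt hlm
    by_cases hmA : m ∈ A <;> by_cases hlA : l ∈ A <;> by_cases hmB : m ∈ B <;>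
        by_cases hlB : l ∈ B <;>
    · simp only [hsa, hb, hG, map_add, map_sub, map_smul, smul_add, smul_sub, smul_smul]
      simp only [insert_self_eq, erase_self_eq, Finset.insert_erase, Finset.erase_insert_eq_erase,
        Finset.erase_insert_of_ne, Finset.mem_insert_self,
        pow_card_insert, pow_card_erase, pow_nlt_insert,
        pow_nlt_erase', nlt_insert_self, nlt_erase_self, Finset.mem_insert, Finset.mem_erase,
        Finset.notMem_erase, hmA, hlA, hmB, hlB, hne, hne', hlm, hnml, pow_add, ne_eq,
        not_false_eq_true, not_true, true_and, and_true, false_and, and_false, or_false, false_or,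
        if_true, if_false, mul_zero, zero_mul, mul_one, one_mul, zero_smul, smul_zero, add_zero,
        zero_add, sub_zero, zero_sub, neg_neg, neg_zero, neg_smul, smul_neg,
        Finset.insert_comm l m, Finset.erase_right_comm (a := m) (b := l)]
      try module
  · have hnlm : ¬ (l < m) := not_lt_of_gt hlm
    by_cases hmA : m ∈ A <;> by_cases hlA : l ∈ A <;> by_cases hmB : m ∈ B <;>
        by_cases hlB : l ∈ B <;>
    · simp only [hsa, hb, hG, map_add, map_sub, map_smul, smul_add, smul_sub, smul_smul]
      simp only [insert_self_eq, erase_self_eq, Finset.insert_erase, Finset.erase_insert_eq_erase,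
        Finset.erase_insert_of_ne, Finset.mem_insert_self,
        pow_card_insert, pow_card_erase, pow_nlt_insert,
        pow_nlt_erase', nlt_insert_self, nlt_erase_self, Finset.mem_insert, Finset.mem_erase,
        Finset.notMem_erase, hmA, hlA, hmB, hlB, hne, hne', hlm, hnlm, pow_add, ne_eq,
        not_false_eq_true, not_true, true_and, and_true, false_and, and_false, or_false, false_or,
        if_true, if_false, mul_zero, zero_mul, mul_one, one_mul, zero_smul, smul_zero, add_zero,
        zero_add, sub_zero, zero_sub, neg_neg, neg_zero, neg_smul, smul_neg,
        Finset.insert_comm l m, Finset.erase_right_comm (a := m) (b := l)]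
      try module

lemma part2_eq (ha : IsCAR_a lam a) (hb : IsCAR_b lam b)
    (hG : IsCAR_G G) (l : ℤ) :
    (G * b l) * star (a l) = star (a l) * (G * b l) := by
  have hsa := star_a_apply ha
  unfold IsCAR_b at hb
  unfold IsCAR_G at hG
  apply ext_basis; intro p; obtain ⟨A, B⟩ := p
  simp only [ContinuousLinearMap.mul_apply]
  by_cases hlA : l ∈ A <;> by_cases hlB : l ∈ B <;>
  · simp only [hsa, hb, hG, map_add, map_sub, map_smul, smul_add, smul_sub, smul_smul]
    simp only [insert_self_eq, erase_self_eq, Finset.insert_erase, Finset.erase_insert_eq_erase,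
      Finset.mem_insert_self,
      pow_card_insert, pow_card_erase, pow_nlt_insert,
      pow_nlt_erase', nlt_insert_self, nlt_erase_self, Finset.mem_insert, Finset.mem_erase,
      Finset.notMem_erase, hlA, hlB, lt_irrefl, pow_add, ne_eq,
      not_false_eq_true, not_true, true_and, and_true, false_and, and_false, or_false, false_or,
      if_true, if_false, mul_zero, zero_mul, mul_one, one_mul, zero_smul, smul_zero, add_zero,
      zero_add, sub_zero, zero_sub, neg_neg, neg_zero, neg_smul, smul_neg]
    try module
    try (rcases Nat.even_or_odd (nlt l A) with h1|h1 <;>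
      rcases Nat.even_or_odd (nlt l B) with h2|h2 <;>
      rcases Nat.even_or_odd A.card with h3|h3 <;>
      rcases Nat.even_or_odd B.card with h4|h4 <;>
      simp only [h1.neg_one_pow, h2.neg_one_pow, h3.neg_one_pow, h4.neg_one_pow] <;>
      module)

end mainparts


/-- in the concrete quasi-free CAR model with `0 < λ_l < 1`, the operators
`G∘b_l` lie in the commutant of the *-algebra generated by the `a_m`: for all `l, m ∈ ℤ`,
`(G∘b_l)∘a_m = a_m∘(G∘b_l)` and `(G∘b_l)∘a_m* = a_m*∘(G∘b_l)`. -/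
theorem stmt9 (lam : ℤ → ℝ) (hlam : ∀ l, 0 < lam l ∧ lam l < 1)
    (a b : ℤ → CARSpace →L[ℂ] CARSpace) (G : CARSpace →L[ℂ] CARSpace)
    (ha : IsCAR_a lam a) (hb : IsCAR_b lam b) (hG : IsCAR_G G) :
    ∀ l m : ℤ,
      (G * b l) * a m = a m * (G * b l) ∧
      (G * b l) * star (a m) = star (a m) * (G * b l) := by
  intro l m
  refine ⟨?_, ?_⟩
  · by_cases hne : l = m
    · subst hne; exact part1_eq ha hb hG l
    · exact part1_ne ha hb hG l m hne
  · by_cases hne : l = m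
    · subst hne; exact part2_eq ha hb hG l
    · exact part2_ne ha hb hG l m hne


end
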